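/- Let m ≥ 1, λ > 0, let b : ℝ^m → ℂ be bounded and measurable, c : ℝ^m → ℂ continuous with compact support, and f : ℝ^m → ℂ Schwartz. Then for every y ∈ ℝ^m one has the kernel representation T_λ*(b(x)·c(ξ)·T_λ f)(y) = C_m² λ^{3m/2} ∫_{ℝ^m} B_λ(y, y′) ĉ(λ(y − y′)) f(y′) dy′, where B_λ(y, y′) = ∫_{ℝ^m} exp(−(λ/2)·((x−y)·(x−y) + (x−y′)·(x−y′))) b(x) dx and ĉ(η) = ∫_{ℝ^m} e^{i ξ·η} c(ξ) dξ. -/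

import Mathlib

open MeasureTheory

/-- The FBI transform `T_λ f(x,ξ) = C_m λ^{3m/4} ∫ e^{−(λ/2)((x−y)² − 2iξ·(x−y) − ξ²)} f(y) dy`
with `C_m = 2^{−m/2} π^{−3m/4}`. -/
noncomputable def fbi {m : ℕ} (lam : ℝ) (f : EuclideanSpace ℝ (Fin m) → ℂ)
    (z : EuclideanSpace ℝ (Fin m) × EuclideanSpace ℝ (Fin m)) : ℂ :=
  ((2 : ℝ) ^ (-(m : ℝ) / 2) * Real.pi ^ (-(3 * (m : ℝ)) / 4) * lam ^ (3 * (m : ℝ) / 4)) •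
    ∫ y : EuclideanSpace ℝ (Fin m),
      Complex.exp (-((lam : ℂ) / 2) *
        (((inner ℝ (z.1 - y) (z.1 - y) : ℝ) : ℂ)
          - 2 * Complex.I * ((inner ℝ z.2 (z.1 - y) : ℝ) : ℂ)
          - ((inner ℝ z.2 z.2 : ℝ) : ℂ))) * f y

/-- The adjoint FBI transform with respect to the weight `Φ(x,ξ) = e^{−λ|ξ|²}`. -/
noncomputable def fbiAdj {m : ℕ} (lam : ℝ)
    (F : EuclideanSpace ℝ (Fin m) × EuclideanSpace ℝ (Fin m) → ℂ)
    (y : EuclideanSpace ℝ (Fin m)) : ℂ :=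
  ((2 : ℝ) ^ (-(m : ℝ) / 2) * Real.pi ^ (-(3 * (m : ℝ)) / 4) * lam ^ (3 * (m : ℝ) / 4)) •
    ∫ z : EuclideanSpace ℝ (Fin m) × EuclideanSpace ℝ (Fin m),
      Complex.exp (-((lam : ℂ) / 2) *
        (((inner ℝ (z.1 - y) (z.1 - y) : ℝ) : ℂ)
          + 2 * Complex.I * ((inner ℝ z.2 (z.1 - y) : ℝ) : ℂ)
          - ((inner ℝ z.2 z.2 : ℝ) : ℂ)))
      * ((Real.exp (-lam * ‖z.2‖ ^ 2) : ℝ) : ℂ) * F z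

lemma keyexp {m : ℕ} (lam : ℝ) (x ξ y y' : EuclideanSpace ℝ (Fin m)) :
    Complex.exp (-((lam : ℂ) / 2) *
        (((inner ℝ (x - y) (x - y) : ℝ) : ℂ)
          + 2 * Complex.I * ((inner ℝ ξ (x - y) : ℝ) : ℂ)
          - ((inner ℝ ξ ξ : ℝ) : ℂ)))
      * ((Real.exp (-lam * ‖ξ‖ ^ 2) : ℝ) : ℂ)
      * Complex.exp (-((lam : ℂ) / 2) *
        (((inner ℝ (x - y') (x - y') : ℝ) : ℂ)
          - 2 * Complex.I * ((inner ℝ ξ (x - y') : ℝ) : ℂ)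
          - ((inner ℝ ξ ξ : ℝ) : ℂ)))
    = ((Real.exp (-(lam / 2) * ((inner ℝ (x - y) (x - y) : ℝ)
          + (inner ℝ (x - y') (x - y') : ℝ))) : ℝ) : ℂ)
      * Complex.exp (Complex.I * ((inner ℝ ξ (lam • (y - y')) : ℝ) : ℂ)) := by
  have h1 : (inner ℝ ξ (x - y) : ℝ) - (inner ℝ ξ (x - y') : ℝ) = -(inner ℝ ξ (y - y') : ℝ) := by
    rw [← inner_sub_right, show (x - y) - (x - y') = -(y - y') from by abel, inner_neg_right]
  have h3 : (inner ℝ ξ ξ : ℝ) = ‖ξ‖ ^ 2 := real_inner_self_eq_norm_sq ξ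
  have h2 : (inner ℝ ξ (lam • (y - y')) : ℝ) = lam * (inner ℝ ξ (y - y') : ℝ) :=
    real_inner_smul_right ξ _ lam
  have h1c := congrArg (fun r : ℝ => (r : ℂ)) h1
  have h2c := congrArg (fun r : ℝ => (r : ℂ)) h2
  have h3c := congrArg (fun r : ℝ => (r : ℂ)) h3
  push_cast at h1c h2c h3c
  rw [Complex.ofReal_exp, Complex.ofReal_exp, ← Complex.exp_add, ← Complex.exp_add,
    ← Complex.exp_add]
  congr 1
  push_cast
  linear_combination (-(lam : ℂ) * Complex.I) * h1c + (lam : ℂ) * h3c + (-Complex.I) * h2c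

/-- kernel representation of `T_λ* (b(x)c(ξ) T_λ f)` for symbols with
separated variables. -/
theorem statement11 (m : ℕ) (hm : 1 ≤ m) (lam : ℝ) (hlam : 0 < lam)
    (b : EuclideanSpace ℝ (Fin m) → ℂ) (hbMeas : Measurable b)
    (hbBdd : ∃ M : ℝ, ∀ x, ‖b x‖ ≤ M)
    (c : EuclideanSpace ℝ (Fin m) → ℂ) (hc : Continuous c) (hcsupp : HasCompactSupport c)
    (f : SchwartzMap (EuclideanSpace ℝ (Fin m)) ℂ) :
    ∀ y : EuclideanSpace ℝ (Fin m),
      fbiAdj lam (fun z => b z.1 * c z.2 * fbi lam (⇑f) z) y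
        = (((2 : ℝ) ^ (-(m : ℝ) / 2) * Real.pi ^ (-(3 * (m : ℝ)) / 4)) ^ 2
            * lam ^ (3 * (m : ℝ) / 2)) •
          ∫ y' : EuclideanSpace ℝ (Fin m),
            (∫ x : EuclideanSpace ℝ (Fin m),
              ((Real.exp (-(lam / 2) * ((inner ℝ (x - y) (x - y) : ℝ)
                + (inner ℝ (x - y') (x - y') : ℝ))) : ℝ) : ℂ) * b x)
            * (∫ ξ : EuclideanSpace ℝ (Fin m),
                Complex.exp (Complex.I * ((inner ℝ ξ (lam • (y - y')) : ℝ) : ℂ)) * c ξ)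
            * f y' := by
  intro y
  obtain ⟨M, hM⟩ := hbBdd
  -- integrability of the components of the dominating function
  have hgauss : Integrable (fun v : EuclideanSpace ℝ (Fin m) =>
      Real.exp (-(lam / 2) * ‖v‖ ^ 2)) := by
    have h := (GaussianFourier.integrable_cexp_neg_mul_sq_norm_add (V := EuclideanSpace ℝ (Fin m))
        (b := ((lam / 2 : ℝ) : ℂ)) (by simpa using half_pos hlam) 0 0).norm
    refine h.congr (Filter.Eventually.of_forall fun v => ?_)
    simp only [Complex.norm_exp, zero_mul, add_zero]
    congr 1
    rw [show (-(((lam / 2 : ℝ)) : ℂ) * ((‖v‖ : ℝ) : ℂ) ^ 2)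
        = (((-(lam / 2) * ‖v‖ ^ 2 : ℝ)) : ℂ) from by push_cast; ring, Complex.ofReal_re]
  have hbx : Integrable (fun x : EuclideanSpace ℝ (Fin m) =>
      Real.exp (-(lam / 2) * ‖x - y‖ ^ 2) * M) := (hgauss.comp_sub_right y).mul_const M
  have hcI : Integrable (fun ξ : EuclideanSpace ℝ (Fin m) => ‖c ξ‖) :=
    (hc.integrable_of_hasCompactSupport hcsupp).norm
  have hfI : Integrable (fun y' : EuclideanSpace ℝ (Fin m) => ‖f y'‖) := f.integrable.norm
  have h12 : Integrable (fun z : EuclideanSpace ℝ (Fin m) × EuclideanSpace ℝ (Fin m) =>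
      Real.exp (-(lam / 2) * ‖z.1 - y‖ ^ 2) * M * ‖c z.2‖) := by
    rw [Measure.volume_eq_prod]; exact hbx.mul_prod hcI
  have hG : Integrable (fun w : (EuclideanSpace ℝ (Fin m) × EuclideanSpace ℝ (Fin m))
      × EuclideanSpace ℝ (Fin m) =>
      Real.exp (-(lam / 2) * ‖w.1.1 - y‖ ^ 2) * M * ‖c w.1.2‖ * ‖f w.2‖) := by
    rw [Measure.volume_eq_prod]; exact h12.mul_prod hfI
  -- the main integrand after combining exponentials
  have hInt : Integrable (Function.uncurry fun
      (z : EuclideanSpace ℝ (Fin m) × EuclideanSpace ℝ (Fin m))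
      (y' : EuclideanSpace ℝ (Fin m)) =>
      ((Real.exp (-(lam / 2) * ((inner ℝ (z.1 - y) (z.1 - y) : ℝ)
          + (inner ℝ (z.1 - y') (z.1 - y') : ℝ))) : ℝ) : ℂ) * b z.1
        * (Complex.exp (Complex.I * ((inner ℝ z.2 (lam • (y - y')) : ℝ) : ℂ)) * c z.2)
        * f y') (volume.prod volume) := by
    rw [← Measure.volume_eq_prod]
    refine hG.mono' ?_ (Filter.Eventually.of_forall fun w => ?_)
    · apply Measurable.aestronglyMeasurable
      show Measurable fun w : (EuclideanSpace ℝ (Fin m) × EuclideanSpace ℝ (Fin m))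
          × EuclideanSpace ℝ (Fin m) =>
        ((Real.exp (-(lam / 2) * ((inner ℝ (w.1.1 - y) (w.1.1 - y) : ℝ)
            + (inner ℝ (w.1.1 - w.2) (w.1.1 - w.2) : ℝ))) : ℝ) : ℂ) * b w.1.1
          * (Complex.exp (Complex.I * ((inner ℝ w.1.2 (lam • (y - w.2)) : ℝ) : ℂ)) * c w.1.2)
          * f w.2
      have hcont1 : Continuous fun w : (EuclideanSpace ℝ (Fin m) × EuclideanSpace ℝ (Fin m))
          × EuclideanSpace ℝ (Fin m) =>
          ((Real.exp (-(lam / 2) * ((inner ℝ (w.1.1 - y) (w.1.1 - y) : ℝ)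
            + (inner ℝ (w.1.1 - w.2) (w.1.1 - w.2) : ℝ))) : ℝ) : ℂ) := by
        apply Complex.continuous_ofReal.comp
        apply Real.continuous_exp.comp
        apply Continuous.mul continuous_const
        exact (((continuous_fst.comp continuous_fst).sub continuous_const).inner
            ((continuous_fst.comp continuous_fst).sub continuous_const)).add
          (((continuous_fst.comp continuous_fst).sub continuous_snd).inner
            ((continuous_fst.comp continuous_fst).sub continuous_snd))
      have hcont2 : Continuous fun w : (EuclideanSpace ℝ (Fin m) × EuclideanSpace ℝ (Fin m))
          × EuclideanSpace ℝ (Fin m) =>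
          Complex.exp (Complex.I * ((inner ℝ w.1.2 (lam • (y - w.2)) : ℝ) : ℂ)) := by
        apply Complex.continuous_exp.comp
        apply Continuous.mul continuous_const
        apply Complex.continuous_ofReal.comp
        exact (continuous_snd.comp continuous_fst).inner
          ((continuous_const.sub continuous_snd).const_smul lam)
      exact (((hcont1.measurable).mul (hbMeas.comp (measurable_fst.comp measurable_fst))).mul
          ((hcont2.measurable).mul (hc.measurable.comp (measurable_snd.comp measurable_fst)))).mul
        (f.continuous.measurable.comp measurable_snd)
    · have hA : (inner ℝ (w.1.1 - y) (w.1.1 - y) : ℝ) = ‖w.1.1 - y‖ ^ 2 :=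
        real_inner_self_eq_norm_sq _
      have hA' : (0 : ℝ) ≤ (inner ℝ (w.1.1 - w.2) (w.1.1 - w.2) : ℝ) := real_inner_self_nonneg
      have he : ‖Complex.exp (Complex.I * ((inner ℝ w.1.2 (lam • (y - w.2)) : ℝ) : ℂ))‖ = 1 := by
        rw [Complex.norm_exp]; simp
      simp only [Function.uncurry, norm_mul, he, one_mul, Complex.norm_real, Real.norm_eq_abs,
        Real.abs_exp]
      have hΦ : Real.exp (-(lam / 2) * ((inner ℝ (w.1.1 - y) (w.1.1 - y) : ℝ)
          + (inner ℝ (w.1.1 - w.2) (w.1.1 - w.2) : ℝ)))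
          ≤ Real.exp (-(lam / 2) * ‖w.1.1 - y‖ ^ 2) := by
        apply Real.exp_le_exp.mpr; nlinarith [hlam.le]
      gcongr
      exact hM w.1.1
  simp only [fbiAdj, fbi]
  set s : ℝ := (2 : ℝ) ^ (-(m : ℝ) / 2) * Real.pi ^ (-(3 * (m : ℝ)) / 4)
      * lam ^ (3 * (m : ℝ) / 4) with hs
  have hz : ∀ z : EuclideanSpace ℝ (Fin m) × EuclideanSpace ℝ (Fin m),
      Complex.exp (-((lam : ℂ) / 2) *
        (((inner ℝ (z.1 - y) (z.1 - y) : ℝ) : ℂ)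
          + 2 * Complex.I * ((inner ℝ z.2 (z.1 - y) : ℝ) : ℂ)
          - ((inner ℝ z.2 z.2 : ℝ) : ℂ)))
      * ((Real.exp (-lam * ‖z.2‖ ^ 2) : ℝ) : ℂ)
      * (b z.1 * c z.2 * s • ∫ y' : EuclideanSpace ℝ (Fin m),
          Complex.exp (-((lam : ℂ) / 2) *
            (((inner ℝ (z.1 - y') (z.1 - y') : ℝ) : ℂ)
              - 2 * Complex.I * ((inner ℝ z.2 (z.1 - y') : ℝ) : ℂ)
              - ((inner ℝ z.2 z.2 : ℝ) : ℂ))) * f y')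
      = (s : ℂ) * ∫ y' : EuclideanSpace ℝ (Fin m),
          ((Real.exp (-(lam / 2) * ((inner ℝ (z.1 - y) (z.1 - y) : ℝ)
              + (inner ℝ (z.1 - y') (z.1 - y') : ℝ))) : ℝ) : ℂ) * b z.1
            * (Complex.exp (Complex.I * ((inner ℝ z.2 (lam • (y - y')) : ℝ) : ℂ)) * c z.2)
            * f y' := by
    intro z
    rw [mul_smul_comm, mul_smul_comm, Complex.real_smul, ← integral_const_mul,
      ← integral_const_mul]
    congr 1
    refine integral_congr_ae (Filter.Eventually.of_forall fun y' => ?_)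
    linear_combination (b z.1 * c z.2 * f y') * keyexp lam z.1 z.2 y y'
  simp only [hz]
  rw [integral_const_mul, integral_integral_swap hInt]
  have hy' : ∀ y' : EuclideanSpace ℝ (Fin m),
      (∫ z : EuclideanSpace ℝ (Fin m) × EuclideanSpace ℝ (Fin m),
        ((Real.exp (-(lam / 2) * ((inner ℝ (z.1 - y) (z.1 - y) : ℝ)
            + (inner ℝ (z.1 - y') (z.1 - y') : ℝ))) : ℝ) : ℂ) * b z.1
          * (Complex.exp (Complex.I * ((inner ℝ z.2 (lam • (y - y')) : ℝ) : ℂ)) * c z.2)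
          * f y')
      = ((∫ x : EuclideanSpace ℝ (Fin m),
            ((Real.exp (-(lam / 2) * ((inner ℝ (x - y) (x - y) : ℝ)
              + (inner ℝ (x - y') (x - y') : ℝ))) : ℝ) : ℂ) * b x)
          * (∫ ξ : EuclideanSpace ℝ (Fin m),
              Complex.exp (Complex.I * ((inner ℝ ξ (lam • (y - y')) : ℝ) : ℂ)) * c ξ))
          * f y' := by
    intro y'
    rw [integral_mul_const]
    congr 1
    rw [Measure.volume_eq_prod]
    exact integral_prod_mul
      (fun x : EuclideanSpace ℝ (Fin m) =>
        ((Real.exp (-(lam / 2) * ((inner ℝ (x - y) (x - y) : ℝ)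
          + (inner ℝ (x - y') (x - y') : ℝ))) : ℝ) : ℂ) * b x)
      (fun ξ : EuclideanSpace ℝ (Fin m) =>
        Complex.exp (Complex.I * ((inner ℝ ξ (lam • (y - y')) : ℝ) : ℂ)) * c ξ)
  simp only [hy']
  have hl : lam ^ (3 * (m : ℝ) / 4) * lam ^ (3 * (m : ℝ) / 4) = lam ^ (3 * (m : ℝ) / 2) := by
    rw [← Real.rpow_add hlam]; congr 1; ring
  have hss : s * s = ((2 : ℝ) ^ (-(m : ℝ) / 2) * Real.pi ^ (-(3 * (m : ℝ)) / 4)) ^ 2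
      * lam ^ (3 * (m : ℝ) / 2) := by
    rw [hs, ← hl]; ring
  rw [Complex.real_smul, Complex.real_smul, ← mul_assoc, ← Complex.ofReal_mul, hss]
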